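/- Let φ ∈ N′, x ∈ φ, and let φ₁ ⊆ φ₂ ⊆ ⋯ be an increasing sequence of elements of N′ with ⋃_{n≥1} φ_n = φ. Then there exists n₀ ≥ 1 such that for all n ≥ n₀ one has x ∈ φ_n and h_c(φ_n, x) = h_c(φ, x). -/

import Mathlib

noncomputable section

namespace Lilypond

open scoped ENNReal

/-- Marked points: a spatial position in `ℝ² = ℝ × ℝ` (with the supremum norm)
together with a mark, which is a direction vector in `ℝ²`. -/
abbrev Pt : Type := (ℝ × ℝ) × (ℝ × ℝ)

def e1 : ℝ × ℝ := (1, 0)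
def e2 : ℝ × ℝ := (0, 1)

/-- The mark space `M = {e₁, −e₁, e₂, −e₂}`. -/
def Mset : Set (ℝ × ℝ) := {e1, -e1, e2, -e2}

/-- The Euclidean norm on `ℝ²` (the norm of `ℝ × ℝ` itself is the sup-norm `|·|_∞`). -/
def eNorm (p : ℝ × ℝ) : ℝ := Real.sqrt (p.1 ^ 2 + p.2 ^ 2)

/-- The eight forbidden directions `{±e₁, ±e₂, (±e₁ ± e₂)/√2}`. -/
def badDirs : Set (ℝ × ℝ) :=
  {e1, -e1, e2, -e2, (Real.sqrt 2)⁻¹ • (e1 + e2), (Real.sqrt 2)⁻¹ • (e1 - e2),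
    (Real.sqrt 2)⁻¹ • (-e1 + e2), (Real.sqrt 2)⁻¹ • (-e1 - e2)}

/-- The set of spatial positions of a marked configuration. -/
def pos (φ : Set Pt) : Set (ℝ × ℝ) := Prod.fst '' φ

/-- `A` contains an (infinite) anisotropic descending chain: there are `b > 0` and pairwise
distinct points `ξ₀, ξ₁, ξ₂, …` of `A` with `|ξ₀ − ξ₁|_∞ ≤ b` and
`|ξ_{i+1} − ξ_i|_∞ < |ξ_i − ξ_{i−1}|_∞` for all `i ≥ 1`. -/
def HasInfDescChain (A : Set (ℝ × ℝ)) : Prop :=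
  ∃ b > (0 : ℝ), ∃ ξ : ℕ → ℝ × ℝ, Function.Injective ξ ∧ (∀ i, ξ i ∈ A) ∧
    ‖ξ 0 - ξ 1‖ ≤ b ∧ ∀ i, 1 ≤ i → ‖ξ (i + 1) - ξ i‖ < ‖ξ i - ξ (i - 1)‖

/-- Local finiteness of a marked configuration. -/
def LocFin (φ : Set Pt) : Prop := ∀ r : ℝ, {x ∈ φ | ‖x.1‖ ≤ r}.Finite

/-- A marked set `φ ⊂ ℝ² × M` is admissible: it is locally finite, all marks lie in `M`,
its set of spatial positions contains no anisotropic descending chain, and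
`(ξ − η)/|ξ − η| ∉ {±e₁, ±e₂, (±e₁ ± e₂)/√2}` (Euclidean normalization) for all distinct
`x = (ξ,v), y = (η,w) ∈ φ`. -/
def Admissible (φ : Set Pt) : Prop :=
  LocFin φ ∧ (∀ x ∈ φ, x.2 ∈ Mset) ∧ ¬ HasInfDescChain (pos φ) ∧
    ∀ x ∈ φ, ∀ y ∈ φ, x ≠ y → (eNorm (x.1 - y.1))⁻¹ • (x.1 - y.1) ∉ badDirs

/-- The half-open growth segment `[ξ, ξ + l·v)`, interpreted as the full ray
`ξ + [0,∞)·v` when `l = ∞`. -/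
def seg (ξ v : ℝ × ℝ) (l : ℝ≥0∞) : Set (ℝ × ℝ) :=
  {p | ∃ t : ℝ, 0 ≤ t ∧ ENNReal.ofReal t < l ∧ p = ξ + t • v}

/-- The tip `ξ + f(x)·v` of the (finite) segment grown from `x = (ξ, v)`. -/
def tip (f : Pt → ℝ≥0∞) (x : Pt) : ℝ × ℝ := x.1 + (f x).toReal • x.2

/-- `y = (η, w)` is a stopping neighbor of `x = (ξ, v)` in `φ` (w.r.t. the growth
function `f`): `y ∈ φ`, `ξ + f(x)v ∈ [η, η + f(y)w)` and `|ξ + f(x)v − η| < f(x)`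
(Euclidean norm). -/
def IsStopNbr (φ : Set Pt) (f : Pt → ℝ≥0∞) (x y : Pt) : Prop :=
  y ∈ φ ∧ tip f x ∈ seg y.1 y.2 (f y) ∧ eNorm (tip f x - y.1) < (f x).toReal

/-- `f` is a growth function for `φ`: the half-open segments `[ξ, ξ + f(x)v)` are pairwise
disjoint (hard-core property), every `x ∈ φ` with `f(x) < ∞` has a unique stopping
neighbor, and (as a normalization identifying `f` with a function on `φ`) `f` vanishes
off `φ`. -/
def IsGrowthFn (φ : Set Pt) (f : Pt → ℝ≥0∞) : Prop :=
  (∀ x ∈ φ, ∀ y ∈ φ, x ≠ y → seg x.1 x.2 (f x) ∩ seg y.1 y.2 (f y) = ∅) ∧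
  (∀ x ∈ φ, f x ≠ ⊤ → ∃! y, IsStopNbr φ f x y) ∧
  (∀ x, x ∉ φ → f x = 0)

open Classical in
/-- The growth function `f_φ` of a configuration (chosen by choice; it is unique on
admissible configurations). -/
def growthFn (φ : Set Pt) : Pt → ℝ≥0∞ :=
  if h : ∃ f, IsGrowthFn φ f then h.choose else fun _ => 0

/-- `N′`: nonempty admissible configurations possessing a growth function which is
finite everywhere on the configuration. -/
def Nprime (φ : Set Pt) : Prop :=
  φ.Nonempty ∧ Admissible φ ∧ (∃ f, IsGrowthFn φ f) ∧ ∀ x ∈ φ, growthFn φ x ≠ ⊤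

open Classical in
/-- The combinatorial descendant `h_c(φ, x)`: the (unique) stopping neighbor of `x`
in `φ`. -/
def hc (φ : Set Pt) (x : Pt) : Pt :=
  if h : ∃ y, IsStopNbr φ (growthFn φ) x y then h.choose else x

/-- The geometric descendant `h_g(φ, x) = ξ + f_φ(x)·v`. -/
def hg (φ : Set Pt) (x : Pt) : ℝ × ℝ := tip (growthFn φ) x

/-- The closed segment `I(φ, x) = [ξ, h_g(φ, x)]`. -/
def I (φ : Set Pt) (x : Pt) : Set (ℝ × ℝ) := segment ℝ x.1 (hg φ x)


/- ======================= Auxiliary lemmas ======================= -/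

open Filter in
private lemma freq_pigeon {F : Set Pt} (hF : F.Finite) {P : ℕ → Prop} {y : ℕ → Pt}
    (h : ∃ᶠ n in atTop, P n) (hmem : ∀ n, P n → y n ∈ F) :
    ∃ w ∈ F, ∃ᶠ n in atTop, P n ∧ y n = w := by
  by_contra hcon
  push_neg at hcon
  have hev : ∀ᶠ n in atTop, ∀ w ∈ F, ¬(P n ∧ y n = w) := by
    rw [Filter.eventually_all_finite hF]
    intro w hw
    have h2 := hcon w hw
    exact h2.mono fun n hn hc => hn hc.1 hc.2
  obtain ⟨n, hP, hall⟩ := (h.and_eventually hev).exists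
  exact hall (y n) (hmem n hP) ⟨hP, rfl⟩

private lemma mark_ne_zero {v : ℝ × ℝ} (hv : v ∈ Mset) : v ≠ 0 := by
  simp only [Mset, Set.mem_insert_iff, Set.mem_singleton_iff] at hv
  rcases hv with rfl | rfl | rfl | rfl <;> simp [e1, e2, Prod.ext_iff]

private lemma eNorm_nonneg (p : ℝ × ℝ) : 0 ≤ eNorm p := Real.sqrt_nonneg _

private lemma eNorm_smul_mark {v : ℝ × ℝ} (hv : v ∈ Mset) (t : ℝ) : eNorm (t • v) = |t| := by
  simp only [Mset, Set.mem_insert_iff, Set.mem_singleton_iff] at hv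
  rcases hv with rfl | rfl | rfl | rfl <;>
    · simp only [e1, e2, Prod.neg_mk, Prod.smul_mk, smul_eq_mul, eNorm]
      ring_nf
      rw [Real.sqrt_sq_eq_abs]

private lemma growthFn_isGrowthFn {ψ : Set Pt} (h : ∃ f, IsGrowthFn ψ f) :
    IsGrowthFn ψ (growthFn ψ) := by
  rw [growthFn, dif_pos h]
  exact h.choose_spec

private lemma exists_stopNbr {ψ : Set Pt} (hψ : Nprime ψ) {z : Pt} (hz : z ∈ ψ) :
    ∃! y, IsStopNbr ψ (growthFn ψ) z y :=
  (growthFn_isGrowthFn hψ.2.2.1).2.1 z hz (hψ.2.2.2 z hz)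

private lemma hc_isStopNbr {ψ : Set Pt} (hψ : Nprime ψ) {z : Pt} (hz : z ∈ ψ) :
    IsStopNbr ψ (growthFn ψ) z (hc ψ z) := by
  obtain ⟨y, hy, -⟩ := exists_stopNbr hψ hz
  have hex : ∃ y, IsStopNbr ψ (growthFn ψ) z y := ⟨y, hy⟩
  rw [hc, dif_pos hex]
  exact hex.choose_spec

private lemma hc_eq_of_isStopNbr {ψ : Set Pt} (hψ : Nprime ψ) {z : Pt} (hz : z ∈ ψ)
    {y : Pt} (hy : IsStopNbr ψ (growthFn ψ) z y) : hc ψ z = y := by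
  obtain ⟨y', -, huniq⟩ := exists_stopNbr hψ hz
  rw [huniq _ (hc_isStopNbr hψ hz), huniq _ hy]

private lemma growthFn_ne_zero {ψ : Set Pt} (hψ : Nprime ψ) {z : Pt} (hz : z ∈ ψ) :
    growthFn ψ z ≠ 0 := by
  intro h0
  obtain ⟨y, hy, -⟩ := exists_stopNbr hψ hz
  have h1 := hy.2.2
  rw [h0, ENNReal.toReal_zero] at h1
  exact absurd h1 (not_lt.mpr (eNorm_nonneg _))

private lemma stopNbr_props {ψ : Set Pt} (hψ : Nprime ψ) {z y : Pt} (hz : z ∈ ψ)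
    (hy : IsStopNbr ψ (growthFn ψ) z y) :
    y ∈ ψ ∧ z ≠ y ∧ ∃ t : ℝ, 0 ≤ t ∧ ENNReal.ofReal t < growthFn ψ y ∧
      z.1 + (growthFn ψ z).toReal • z.2 = y.1 + t • y.2 ∧ t < (growthFn ψ z).toReal := by
  obtain ⟨hyψ, ⟨t, ht0, htl, htp⟩, hdist⟩ := hy
  have hw : y.2 ∈ Mset := hψ.2.1.2.1 y hyψ
  have hvz : z.2 ∈ Mset := hψ.2.1.2.1 z hz
  have hsub : tip (growthFn ψ) z - y.1 = t • y.2 := by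
    rw [htp]; exact add_sub_cancel_left _ _
  have htc : t < (growthFn ψ z).toReal := by
    have h1 : eNorm (tip (growthFn ψ) z - y.1) = |t| := by rw [hsub, eNorm_smul_mark hw]
    rw [h1, abs_of_nonneg ht0] at hdist
    exact hdist
  have heq : z.1 + (growthFn ψ z).toReal • z.2 = y.1 + t • y.2 := htp
  refine ⟨hyψ, ?_, t, ht0, htl, heq, htc⟩
  rintro rfl
  have h2 : (growthFn ψ z).toReal • z.2 = t • z.2 := add_left_cancel heq
  have h3 : ((growthFn ψ z).toReal - t) • z.2 = 0 := by
    rw [sub_smul, h2, sub_self]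
  rcases smul_eq_zero.mp h3 with h4 | h4
  · have h5 : (growthFn ψ z).toReal = t := by
      have := sub_eq_zero.mp h4
      linarith
    linarith
  · exact mark_ne_zero hvz h4

private lemma pos_ne {ψ : Set Pt} (hψ : Nprime ψ) {z y : Pt} (hz : z ∈ ψ) (hy : y ∈ ψ)
    (hne : z ≠ y) : z.1 ≠ y.1 := by
  intro hpos
  have hdisj := (growthFn_isGrowthFn hψ.2.2.1).1 z hz y hy hne
  have h1 : z.1 ∈ seg z.1 z.2 (growthFn ψ z) :=
    ⟨0, le_rfl, by simpa using pos_iff_ne_zero.mpr (growthFn_ne_zero hψ hz), by simp⟩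
  have h2 : z.1 ∈ seg y.1 y.2 (growthFn ψ y) :=
    ⟨0, le_rfl, by simpa using pos_iff_ne_zero.mpr (growthFn_ne_zero hψ hy), by rw [hpos]; simp⟩
  have : z.1 ∈ seg z.1 z.2 (growthFn ψ z) ∩ seg y.1 y.2 (growthFn ψ y) := ⟨h1, h2⟩
  rw [hdisj] at this
  exact this
private lemma eNorm_pair (a b : ℝ) : eNorm (a, b) = Real.sqrt (a ^ 2 + b ^ 2) := rfl

private lemma badDirs_horiz {a : ℝ} (ha : a ≠ 0) :
    (eNorm ((a : ℝ), (0 : ℝ)))⁻¹ • ((a : ℝ), (0 : ℝ)) ∈ badDirs := by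
  have h1 : eNorm (a, 0) = |a| := by
    rw [eNorm_pair]; ring_nf; rw [Real.sqrt_sq_eq_abs]
  rw [h1]
  have h2 : |a|⁻¹ • ((a : ℝ), (0 : ℝ)) = (|a|⁻¹ * a, 0) := by
    simp [Prod.smul_mk]
  rw [h2]
  rcases lt_or_gt_of_ne ha with h | h
  · have : |a|⁻¹ * a = -1 := by
      rw [abs_of_neg h]; field_simp
    rw [this]
    right; left
    simp [e1, Prod.ext_iff]
  · have : |a|⁻¹ * a = 1 := by
      rw [abs_of_pos h]; field_simp
    rw [this]
    left
    simp [e1, Prod.ext_iff]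

private lemma badDirs_vert {a : ℝ} (ha : a ≠ 0) :
    (eNorm ((0 : ℝ), (a : ℝ)))⁻¹ • ((0 : ℝ), (a : ℝ)) ∈ badDirs := by
  have h1 : eNorm (0, a) = |a| := by
    rw [eNorm_pair]; ring_nf; rw [Real.sqrt_sq_eq_abs]
  rw [h1]
  have h2 : |a|⁻¹ • ((0 : ℝ), (a : ℝ)) = (0, |a|⁻¹ * a) := by
    simp [Prod.smul_mk]
  rw [h2]
  rcases lt_or_gt_of_ne ha with h | h
  · have : |a|⁻¹ * a = -1 := by
      rw [abs_of_neg h]; field_simp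
    rw [this]
    right; right; right; left
    simp [e2, Prod.ext_iff]
  · have : |a|⁻¹ * a = 1 := by
      rw [abs_of_pos h]; field_simp
    rw [this]
    right; right; left
    simp [e2, Prod.ext_iff]

private lemma norm_pair_fst {a b c : ℝ} (ha : |a| = c) (hb : |b| ≤ c) :
    ‖((a, b) : ℝ × ℝ)‖ = c := by
  rw [Prod.norm_def]
  simp only [Real.norm_eq_abs]
  rw [ha]
  exact max_eq_left hb

private lemma norm_pair_snd {a b c : ℝ} (hb : |b| = c) (ha : |a| ≤ c) :
    ‖((a, b) : ℝ × ℝ)‖ = c := by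
  rw [Prod.norm_def]
  simp only [Real.norm_eq_abs]
  rw [hb]
  exact max_eq_right ha

/-- Key geometric lemma: if the tip of `z`'s segment (grown to length `c`) lies on `y`'s
segment at parameter `t < c`, then the marks of `z` and `y` are perpendicular and the
sup-distance of the positions is exactly `c`. -/
private lemma key_dist {φ : Set Pt} (hadm : Admissible φ) {z y : Pt} (hz : z ∈ φ) (hy : y ∈ φ)
    (hne : z ≠ y) {c t : ℝ} (hc0 : 0 < c) (ht0 : 0 ≤ t) (htc : t < c)
    (heq : z.1 + c • z.2 = y.1 + t • y.2) : ‖z.1 - y.1‖ = c := by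
  have hv := hadm.2.1 z hz
  have hw := hadm.2.1 y hy
  have hdir := hadm.2.2.2 z hz y hy hne
  simp only [Mset, Set.mem_insert_iff, Set.mem_singleton_iff] at hv hw
  have h1 := congrArg Prod.fst heq
  have h2 := congrArg Prod.snd heq
  simp only [Prod.fst_add, Prod.snd_add, Prod.smul_fst, Prod.smul_snd, smul_eq_mul] at h1 h2
  rcases hv with hv | hv | hv | hv <;> rcases hw with hw | hw | hw | hw <;>
      rw [hv] at h1 h2 <;> rw [hw] at h1 h2 <;>
      simp only [e1, e2, Prod.fst_neg, Prod.snd_neg, neg_neg, mul_one, mul_zero, mul_neg,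
        add_zero, neg_zero] at h1 h2
  -- 16 cases; h1, h2 are linear equations on the components.
  -- case v = e1, w = e1
  · exfalso; apply hdir
    have hd : z.1 - y.1 = ((t - c : ℝ), (0 : ℝ)) := by
      rw [Prod.ext_iff]; constructor <;> simp only [Prod.fst_sub, Prod.snd_sub] <;> linarith
    rw [hd]; exact badDirs_horiz (by linarith)
  -- v = e1, w = -e1
  · exfalso; apply hdir
    have hd : z.1 - y.1 = ((-t - c : ℝ), (0 : ℝ)) := by
      rw [Prod.ext_iff]; constructor <;> simp only [Prod.fst_sub, Prod.snd_sub] <;> linarith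
    rw [hd]; exact badDirs_horiz (by linarith)
  -- v = e1, w = e2
  · have hd : z.1 - y.1 = ((-c : ℝ), (t : ℝ)) := by
      rw [Prod.ext_iff]; constructor <;> simp only [Prod.fst_sub, Prod.snd_sub] <;> linarith
    rw [hd]; exact norm_pair_fst (by rw [abs_neg, abs_of_pos hc0]) (by rw [abs_of_nonneg ht0]; linarith)
  -- v = e1, w = -e2
  · have hd : z.1 - y.1 = ((-c : ℝ), (-t : ℝ)) := by
      rw [Prod.ext_iff]; constructor <;> simp only [Prod.fst_sub, Prod.snd_sub] <;> linarith
    rw [hd]; exact norm_pair_fst (by rw [abs_neg, abs_of_pos hc0]) (by rw [abs_neg, abs_of_nonneg ht0]; linarith)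
  -- v = -e1, w = e1
  · exfalso; apply hdir
    have hd : z.1 - y.1 = ((t + c : ℝ), (0 : ℝ)) := by
      rw [Prod.ext_iff]; constructor <;> simp only [Prod.fst_sub, Prod.snd_sub] <;> linarith
    rw [hd]; exact badDirs_horiz (by linarith)
  -- v = -e1, w = -e1
  · exfalso; apply hdir
    have hd : z.1 - y.1 = ((c - t : ℝ), (0 : ℝ)) := by
      rw [Prod.ext_iff]; constructor <;> simp only [Prod.fst_sub, Prod.snd_sub] <;> linarith
    rw [hd]; exact badDirs_horiz (by linarith)
  -- v = -e1, w = e2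
  · have hd : z.1 - y.1 = ((c : ℝ), (t : ℝ)) := by
      rw [Prod.ext_iff]; constructor <;> simp only [Prod.fst_sub, Prod.snd_sub] <;> linarith
    rw [hd]; exact norm_pair_fst (by rw [abs_of_pos hc0]) (by rw [abs_of_nonneg ht0]; linarith)
  -- v = -e1, w = -e2
  · have hd : z.1 - y.1 = ((c : ℝ), (-t : ℝ)) := by
      rw [Prod.ext_iff]; constructor <;> simp only [Prod.fst_sub, Prod.snd_sub] <;> linarith
    rw [hd]; exact norm_pair_fst (by rw [abs_of_pos hc0]) (by rw [abs_neg, abs_of_nonneg ht0]; linarith)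
  -- v = e2, w = e1
  · have hd : z.1 - y.1 = ((t : ℝ), (-c : ℝ)) := by
      rw [Prod.ext_iff]; constructor <;> simp only [Prod.fst_sub, Prod.snd_sub] <;> linarith
    rw [hd]; exact norm_pair_snd (by rw [abs_neg, abs_of_pos hc0]) (by rw [abs_of_nonneg ht0]; linarith)
  -- v = e2, w = -e1
  · have hd : z.1 - y.1 = ((-t : ℝ), (-c : ℝ)) := by
      rw [Prod.ext_iff]; constructor <;> simp only [Prod.fst_sub, Prod.snd_sub] <;> linarith
    rw [hd]; exact norm_pair_snd (by rw [abs_neg, abs_of_pos hc0]) (by rw [abs_neg, abs_of_nonneg ht0]; linarith)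
  -- v = e2, w = e2
  · exfalso; apply hdir
    have hd : z.1 - y.1 = ((0 : ℝ), (t - c : ℝ)) := by
      rw [Prod.ext_iff]; constructor <;> simp only [Prod.fst_sub, Prod.snd_sub] <;> linarith
    rw [hd]; exact badDirs_vert (by linarith)
  -- v = e2, w = -e2
  · exfalso; apply hdir
    have hd : z.1 - y.1 = ((0 : ℝ), (-t - c : ℝ)) := by
      rw [Prod.ext_iff]; constructor <;> simp only [Prod.fst_sub, Prod.snd_sub] <;> linarith
    rw [hd]; exact badDirs_vert (by linarith)
  -- v = -e2, w = e1
  · have hd : z.1 - y.1 = ((t : ℝ), (c : ℝ)) := by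
      rw [Prod.ext_iff]; constructor <;> simp only [Prod.fst_sub, Prod.snd_sub] <;> linarith
    rw [hd]; exact norm_pair_snd (by rw [abs_of_pos hc0]) (by rw [abs_of_nonneg ht0]; linarith)
  -- v = -e2, w = -e1
  · have hd : z.1 - y.1 = ((-t : ℝ), (c : ℝ)) := by
      rw [Prod.ext_iff]; constructor <;> simp only [Prod.fst_sub, Prod.snd_sub] <;> linarith
    rw [hd]; exact norm_pair_snd (by rw [abs_of_pos hc0]) (by rw [abs_neg, abs_of_nonneg ht0]; linarith)
  -- v = -e2, w = e2
  · exfalso; apply hdir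
    have hd : z.1 - y.1 = ((0 : ℝ), (t + c : ℝ)) := by
      rw [Prod.ext_iff]; constructor <;> simp only [Prod.fst_sub, Prod.snd_sub] <;> linarith
    rw [hd]; exact badDirs_vert (by linarith)
  -- v = -e2, w = -e2
  · exfalso; apply hdir
    have hd : z.1 - y.1 = ((0 : ℝ), (c - t : ℝ)) := by
      rw [Prod.ext_iff]; constructor <;> simp only [Prod.fst_sub, Prod.snd_sub] <;> linarith
    rw [hd]; exact badDirs_vert (by linarith)
open Filter in
/-- The invariant carried along the descending-chain construction. -/
private def Good (φ : Set Pt) (φs : ℕ → Set Pt) (p : Pt) (S : ℕ → Prop) : Prop :=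
  p ∈ φ ∧ (∃ᶠ n in atTop, S n) ∧ ∀ n, S n → p ∈ φs n ∧ growthFn (φs n) p ≠ growthFn φ p

/-- The current comparison scale. -/
private def sVal (φ : Set Pt) (φs : ℕ → Set Pt) (n : ℕ) (p : Pt) : ℝ :=
  (min (growthFn (φs n) p) (growthFn φ p)).toReal

open Filter in
private lemma step_lemma {φ : Set Pt} (hφ : Nprime φ) {φs : ℕ → Set Pt}
    (hN : ∀ n, Nprime (φs n)) (hsub : ∀ n, φs n ⊆ φ)
    (hmem_ev : ∀ {w : Pt}, w ∈ φ → ∀ᶠ n in atTop, w ∈ φs n)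
    {p : Pt} {S : ℕ → Prop} (hG : Good φ φs p S) :
    ∃ q S', Good φ φs q S' ∧ (∀ n, S' n → S n) ∧
      ∀ n, S' n → ‖p.1 - q.1‖ = sVal φ φs n p ∧ sVal φ φs n q < sVal φ φs n p := by
  obtain ⟨hpφ, hSfreq, hSmem⟩ := hG
  have hadm := hφ.2.1
  have hfG := growthFn_isGrowthFn hφ.2.2.1
  have hfp_ne_top : growthFn φ p ≠ ⊤ := hφ.2.2.2 p hpφ
  have hsplit : ∃ᶠ n in atTop,
      (S n ∧ growthFn (φs n) p < growthFn φ p) ∨ (S n ∧ growthFn φ p < growthFn (φs n) p) := by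
    refine hSfreq.mono fun n hn => ?_
    rcases lt_or_gt_of_ne (hSmem n hn).2 with h | h
    · exact Or.inl ⟨hn, h⟩
    · exact Or.inr ⟨hn, h⟩
  rcases frequently_or_distrib.mp hsplit with hA | hB
  · -- Case A : the approximating growth value is smaller
    have key : ∀ n, S n → growthFn (φs n) p < growthFn φ p →
        hc (φs n) p ∈ φ ∧ ‖p.1 - (hc (φs n) p).1‖ = sVal φ φs n p ∧
          sVal φ φs n (hc (φs n) p) < sVal φ φs n p ∧ hc (φs n) p ∈ φs n ∧
          growthFn (φs n) (hc (φs n) p) ≠ growthFn φ (hc (φs n) p) := by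
      intro n hSn hlt
      have hpn : p ∈ φs n := (hSmem n hSn).1
      have hNn := hN n
      obtain ⟨hyn, hpne, t, ht0, htl, heq, htc⟩ :=
        stopNbr_props hNn hpn (hc_isStopNbr hNn hpn)
      set y := hc (φs n) p with hy_def
      have hyφ : y ∈ φ := hsub n hyn
      have hfnp_ne_top : growthFn (φs n) p ≠ ⊤ := hNn.2.2.2 p hpn
      have hfnp_ne_zero : growthFn (φs n) p ≠ 0 := growthFn_ne_zero hNn hpn
      set c := (growthFn (φs n) p).toReal with hc_def
      have hc0 : 0 < c := ENNReal.toReal_pos hfnp_ne_zero hfnp_ne_top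
      have hdist : ‖p.1 - y.1‖ = c := key_dist hadm hpφ hyφ hpne hc0 ht0 htc heq
      have htip_in : (p.1 + c • p.2) ∈ seg p.1 p.2 (growthFn φ p) :=
        ⟨c, hc0.le, by rw [ENNReal.ofReal_toReal hfnp_ne_top]; exact hlt, rfl⟩
      have hdisj := hfG.1 p hpφ y hyφ hpne
      have hnotin : (p.1 + c • p.2) ∉ seg y.1 y.2 (growthFn φ y) := by
        intro hin
        have hmem2 : (p.1 + c • p.2) ∈
            seg p.1 p.2 (growthFn φ p) ∩ seg y.1 y.2 (growthFn φ y) := ⟨htip_in, hin⟩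
        rw [hdisj] at hmem2
        exact hmem2
      have hfy_le : growthFn φ y ≤ ENNReal.ofReal t := by
        by_contra hlt'
        push_neg at hlt'
        exact hnotin ⟨t, ht0, hlt', heq⟩
      have hflt : growthFn φ y < growthFn (φs n) y := lt_of_le_of_lt hfy_le htl
      have hsvp : sVal φ φs n p = c := by
        rw [sVal, min_eq_left hlt.le]
      have hsvy : sVal φ φs n y = (growthFn φ y).toReal := by
        rw [sVal, min_eq_right hflt.le]
      refine ⟨hyφ, by rw [hsvp]; exact hdist, ?_, hyn, (ne_of_lt hflt).symm⟩
      rw [hsvp, hsvy]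
      have h1 : (growthFn φ y).toReal ≤ t := ENNReal.toReal_le_of_le_ofReal ht0 hfy_le
      linarith
    set R := ‖p.1‖ + (growthFn φ p).toReal with hR_def
    have hFfin : {q ∈ φ | ‖q.1‖ ≤ R}.Finite := hadm.1 R
    have hbound : ∀ n, (S n ∧ growthFn (φs n) p < growthFn φ p) →
        hc (φs n) p ∈ {q ∈ φ | ‖q.1‖ ≤ R} := by
      rintro n ⟨hSn, hlt⟩
      obtain ⟨hyφ, hdist, -, -, -⟩ := key n hSn hlt
      refine ⟨hyφ, ?_⟩
      have h1 : ‖(hc (φs n) p).1‖ ≤ ‖p.1‖ + ‖p.1 - (hc (φs n) p).1‖ := by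
        have h2 : (hc (φs n) p).1 = p.1 - (p.1 - (hc (φs n) p).1) := by abel
        calc ‖(hc (φs n) p).1‖ = ‖p.1 - (p.1 - (hc (φs n) p).1)‖ := by rw [← h2]
          _ ≤ ‖p.1‖ + ‖p.1 - (hc (φs n) p).1‖ := norm_sub_le _ _
      rw [hdist] at h1
      have h3 : sVal φ φs n p ≤ (growthFn φ p).toReal :=
        ENNReal.toReal_mono hfp_ne_top (min_le_right _ _)
      calc ‖(hc (φs n) p).1‖ ≤ ‖p.1‖ + sVal φ φs n p := h1
        _ ≤ R := by rw [hR_def]; linarith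
    obtain ⟨w, hwF, hwfreq⟩ := freq_pigeon hFfin hA hbound
    refine ⟨w, fun n => (S n ∧ growthFn (φs n) p < growthFn φ p) ∧ hc (φs n) p = w,
      ⟨hwF.1, hwfreq, ?_⟩, fun n hn => hn.1.1, ?_⟩
    · rintro n ⟨⟨hSn, hlt⟩, hw⟩
      obtain ⟨-, -, -, hin, hne⟩ := key n hSn hlt
      rw [← hw]
      exact ⟨hin, hne⟩
    · rintro n ⟨⟨hSn, hlt⟩, hw⟩
      obtain ⟨-, hd, hs, -, -⟩ := key n hSn hlt
      rw [← hw]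
      exact ⟨hd, hs⟩
  · -- Case B : the true growth value is smaller
    obtain ⟨hyφ, hpne, t, ht0, htl, heq, htc⟩ := stopNbr_props hφ hpφ (hc_isStopNbr hφ hpφ)
    set y := hc φ p with hy_def
    have hfp_ne_zero : growthFn φ p ≠ 0 := growthFn_ne_zero hφ hpφ
    set c := (growthFn φ p).toReal with hc_def
    have hc0 : 0 < c := ENNReal.toReal_pos hfp_ne_zero hfp_ne_top
    have hdist : ‖p.1 - y.1‖ = c := key_dist hadm hpφ hyφ hpne hc0 ht0 htc heq
    have hfreq' : ∃ᶠ n in atTop,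
        (S n ∧ growthFn φ p < growthFn (φs n) p) ∧ y ∈ φs n :=
      hB.and_eventually (hmem_ev hyφ)
    have key : ∀ n, ((S n ∧ growthFn φ p < growthFn (φs n) p) ∧ y ∈ φs n) →
        growthFn (φs n) y < growthFn φ y ∧ sVal φ φs n p = c ∧
          sVal φ φs n y < sVal φ φs n p := by
      rintro n ⟨⟨hSn, hlt⟩, hyn⟩
      have hpn : p ∈ φs n := (hSmem n hSn).1
      have hdisj := (growthFn_isGrowthFn (hN n).2.2.1).1 p hpn y hyn hpne
      have htip_in : (p.1 + c • p.2) ∈ seg p.1 p.2 (growthFn (φs n) p) :=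
        ⟨c, hc0.le, by rw [ENNReal.ofReal_toReal hfp_ne_top]; exact hlt, rfl⟩
      have hnotin : (p.1 + c • p.2) ∉ seg y.1 y.2 (growthFn (φs n) y) := by
        intro hin
        have hmem2 : (p.1 + c • p.2) ∈
            seg p.1 p.2 (growthFn (φs n) p) ∩ seg y.1 y.2 (growthFn (φs n) y) := ⟨htip_in, hin⟩
        rw [hdisj] at hmem2
        exact hmem2
      have hfny_le : growthFn (φs n) y ≤ ENNReal.ofReal t := by
        by_contra hlt'
        push_neg at hlt'
        exact hnotin ⟨t, ht0, hlt', heq⟩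
      have hflt : growthFn (φs n) y < growthFn φ y := lt_of_le_of_lt hfny_le htl
      have hsvp : sVal φ φs n p = c := by
        rw [sVal, min_eq_right hlt.le]
      have hsvy : sVal φ φs n y = (growthFn (φs n) y).toReal := by
        rw [sVal, min_eq_left hflt.le]
      refine ⟨hflt, hsvp, ?_⟩
      rw [hsvp, hsvy]
      have h1 : (growthFn (φs n) y).toReal ≤ t := ENNReal.toReal_le_of_le_ofReal ht0 hfny_le
      linarith
    refine ⟨y, fun n => (S n ∧ growthFn φ p < growthFn (φs n) p) ∧ y ∈ φs n,
      ⟨hyφ, hfreq', ?_⟩, fun n hn => hn.1.1, ?_⟩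
    · intro n hn
      exact ⟨hn.2, (ne_of_lt (key n hn).1)⟩
    · intro n hn
      obtain ⟨-, hsvp, hs⟩ := key n hn
      exact ⟨by rw [hsvp]; exact hdist, hs⟩
open Filter in
private lemma eventually_growth_eq (φ : Set Pt) (hφ : Nprime φ) (φs : ℕ → Set Pt)
    (hmono : ∀ n, φs n ⊆ φs (n + 1)) (hN : ∀ n, Nprime (φs n))
    (hUnion : (⋃ n, φs n) = φ) {z : Pt} (hz : z ∈ φ) :
    ∀ᶠ n in atTop, z ∈ φs n ∧ growthFn (φs n) z = growthFn φ z := by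
  have hsub : ∀ n, φs n ⊆ φ := fun n => hUnion ▸ Set.subset_iUnion φs n
  have hmono' : ∀ {m n : ℕ}, m ≤ n → φs m ⊆ φs n := by
    intro m n h
    induction h with
    | refl => exact subset_rfl
    | step h ih => exact fun a ha => hmono _ (ih ha)
  have hmem_ev : ∀ {w : Pt}, w ∈ φ → ∀ᶠ n in atTop, w ∈ φs n := by
    intro w hw
    rw [← hUnion] at hw
    obtain ⟨k, hk⟩ := Set.mem_iUnion.mp hw
    exact eventually_atTop.mpr ⟨k, fun n hn => hmono' hn hk⟩
  by_contra hcon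
  rw [Filter.not_eventually] at hcon
  have hfreq : ∃ᶠ n in atTop, z ∈ φs n ∧ growthFn (φs n) z ≠ growthFn φ z := by
    refine (hcon.and_eventually (hmem_ev hz)).mono ?_
    rintro n ⟨hne, hm⟩
    exact ⟨hm, fun h => hne ⟨hm, h⟩⟩
  have hadm := hφ.2.1
  have good0 : Good φ φs z (fun n => z ∈ φs n ∧ growthFn (φs n) z ≠ growthFn φ z) :=
    ⟨hz, hfreq, fun n hn => hn⟩
  -- iterate the step lemma
  have step' : ∀ u : {ps : Pt × (ℕ → Prop) // Good φ φs ps.1 ps.2},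
      ∃ v : {ps : Pt × (ℕ → Prop) // Good φ φs ps.1 ps.2},
        (∀ n, v.1.2 n → u.1.2 n) ∧
        ∀ n, v.1.2 n → ‖u.1.1.1 - v.1.1.1‖ = sVal φ φs n u.1.1 ∧
          sVal φ φs n v.1.1 < sVal φ φs n u.1.1 := by
    rintro ⟨⟨p, S⟩, hG⟩
    obtain ⟨q, S', hG', hsub', hrel⟩ := step_lemma hφ hN hsub (fun {w} hw => hmem_ev hw) hG
    exact ⟨⟨⟨q, S'⟩, hG'⟩, hsub', hrel⟩
  choose nxt h1 h2 using step'
  set u : ℕ → {ps : Pt × (ℕ → Prop) // Good φ φs ps.1 ps.2} :=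
    fun i => nxt^[i] ⟨⟨z, fun n => z ∈ φs n ∧ growthFn (φs n) z ≠ growthFn φ z⟩, good0⟩
    with hu_def
  have hu : ∀ i, u (i + 1) = nxt (u i) := fun i => Function.iterate_succ_apply' nxt i _
  have hGood : ∀ i, Good φ φs (u i).1.1 (u i).1.2 := fun i => (u i).2
  have hSsub : ∀ i n, (u (i + 1)).1.2 n → (u i).1.2 n := by
    intro i n h
    rw [hu i] at h
    exact h1 (u i) n h
  have hrel : ∀ i n, (u (i + 1)).1.2 n →
      ‖(u i).1.1.1 - (u (i + 1)).1.1.1‖ = sVal φ φs n (u i).1.1 ∧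
        sVal φ φs n (u (i + 1)).1.1 < sVal φ φs n (u i).1.1 := by
    intro i n h
    rw [hu i] at h ⊢
    exact h2 (u i) n h
  have hnonempty : ∀ i, ∃ n, (u i).1.2 n := fun i => ((hGood i).2.1).exists
  have hsmono : ∀ j n, (u j).1.2 n → ∀ i, i < j →
      sVal φ φs n (u j).1.1 < sVal φ φs n (u i).1.1 := by
    intro j
    induction j with
    | zero => intro n _ i hi; omega
    | succ j ih =>
      intro n hn i hi
      have hdec := (hrel j n hn).2
      rcases Nat.lt_succ_iff_lt_or_eq.mp hi with hi' | rfl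
      · exact hdec.trans (ih n (hSsub j n hn) i hi')
      · exact hdec
  have hzsne : ∀ i j, i < j → (u i).1.1 ≠ (u j).1.1 := by
    intro i j hij heq
    obtain ⟨n, hn⟩ := hnonempty j
    have := hsmono j n hn i hij
    rw [heq] at this
    exact lt_irrefl _ this
  have hposne : ∀ i j, i < j → (u i).1.1.1 ≠ (u j).1.1.1 := fun i j hij =>
    pos_ne hφ (hGood i).1 (hGood j).1 (hzsne i j hij)
  have hdd : ∀ i, ‖(u (i + 1)).1.1.1 - (u (i + 2)).1.1.1‖ < ‖(u i).1.1.1 - (u (i + 1)).1.1.1‖ := by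
    intro i
    obtain ⟨n, hn⟩ := hnonempty (i + 2)
    have hn1 : (u (i + 1)).1.2 n := hSsub (i + 1) n hn
    have r1 := hrel i n hn1
    have r2 := hrel (i + 1) n hn
    rw [r2.1, r1.1]
    exact r1.2
  apply hadm.2.2.1
  refine ⟨‖(u 0).1.1.1 - (u 1).1.1.1‖ + 1, by positivity, fun i => (u i).1.1.1, ?_, ?_, ?_, ?_⟩
  · intro i j hij
    by_contra hne
    rcases lt_trichotomy i j with h | h | h
    · exact hposne i j h hij
    · exact hne h
    · exact hposne j i h hij.symm
  · exact fun i => ⟨(u i).1.1, (hGood i).1, rfl⟩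
  · linarith [norm_nonneg ((u 0).1.1.1 - (u 1).1.1.1)]
  · intro i hi
    obtain ⟨k, rfl⟩ := Nat.exists_eq_add_of_le hi
    have hk1 : 1 + k - 1 = k := by omega
    have hk2 : 1 + k + 1 = k + 2 := by omega
    have hk3 : 1 + k = k + 1 := by omega
    rw [hk1, hk2, hk3]
    have h := hdd k
    rwa [norm_sub_rev ((u (k + 1)).1.1.1) ((u (k + 2)).1.1.1),
      norm_sub_rev ((u k).1.1.1) ((u (k + 1)).1.1.1)] at h


/-- Corollary: stabilization of the combinatorial descendant.
Let `φ ∈ N′`, `x ∈ φ`, and let `φ₁ ⊆ φ₂ ⊆ ⋯` be an increasing sequence in `N′` with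
`⋃_n φ_n = φ`.  Then there exists `n₀` such that for all `n ≥ n₀` one has `x ∈ φ_n`
and `h_c(φ_n, x) = h_c(φ, x)`. -/
theorem hc_stabilizes (φ : Set Pt) (hφ : Nprime φ) (x : Pt) (hx : x ∈ φ)
    (φs : ℕ → Set Pt) (hmono : ∀ n, φs n ⊆ φs (n + 1)) (hN : ∀ n, Nprime (φs n))
    (hUnion : (⋃ n, φs n) = φ) :
    ∃ n₀ : ℕ, ∀ n ≥ n₀, x ∈ φs n ∧ hc (φs n) x = hc φ x := by
  have hx' := eventually_growth_eq φ hφ φs hmono hN hUnion hx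
  have hstop := hc_isStopNbr hφ hx
  have hyφ : hc φ x ∈ φ := hstop.1
  have hy' := eventually_growth_eq φ hφ φs hmono hN hUnion hyφ
  obtain ⟨n₀, hn₀⟩ := Filter.eventually_atTop.mp (hx'.and hy')
  refine ⟨n₀, fun n hn => ?_⟩
  obtain ⟨⟨hxn, hfx⟩, hyn, hfy⟩ := hn₀ n hn
  refine ⟨hxn, ?_⟩
  have htip_eq : tip (growthFn (φs n)) x = tip (growthFn φ) x := by
    rw [tip, tip, hfx]
  have hstop' : IsStopNbr (φs n) (growthFn (φs n)) x (hc φ x) := by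
    obtain ⟨-, htipm, hd⟩ := hstop
    refine ⟨hyn, ?_, ?_⟩
    · rw [htip_eq, hfy]
      exact htipm
    · rw [htip_eq, hfx]
      exact hd
  exact hc_eq_of_isStopNbr (hN n) hxn hstop'

end Lilypond
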